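/- arXiv:math/9705219 — 2 statements merged into one kernel-verified Lean document; each statement's English description precedes it below -/
import Mathlib

section
/- Fix integers k ≥ 2 and n ≥ 2, and let G be a connected graph belonging to Σ_{n,k}, with blocks W_1, …, W_r of sizes w_i = |W_i| (since G is connected and lies in Σ_{n,k}, each W_i is a clique with w_i ≥ k vertices). Then μ_{Σ_{n,k}}(0̂, G) = Π_{i=1}^r μ_{Σ_{w_i,k}}(0̂, 1̂), where 0̂ denotes the empty graph (the least element) and 1̂ denotes the complete graph on w_i vertices (the greatest element of Σ_{w_i,k}, using that w_i ≥ k). -/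
open Finset

def graphOf (n : ℕ) (E : Finset (Finset (Fin n))) : SimpleGraph (Fin n) where
  Adj u v := u ≠ v ∧ ({u, v} : Finset (Fin n)) ∈ E
  symm := ⟨by
    rintro u v ⟨h1, h2⟩
    exact ⟨h1.symm, by rwa [Finset.pair_comm]⟩⟩
  loopless := ⟨fun u h => h.1 rfl⟩

lemma graphOf_adj {n : ℕ} {E : Finset (Finset (Fin n))} {u v : Fin n} :
    (graphOf n E).Adj u v ↔ u ≠ v ∧ ({u, v} : Finset (Fin n)) ∈ E := Iff.rfl

def IsGraphEdges (n : ℕ) (E : Finset (Finset (Fin n))) : Prop := ∀ e ∈ E, e.card = 2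

def IsTwoConn {V : Type} [Fintype V] (G : SimpleGraph V) : Prop :=
  2 ≤ Fintype.card V ∧ G.Connected ∧
    ∀ v : V, (G.induce ({v}ᶜ : Set V)).Connected

def BlockCand {V : Type} (G : SimpleGraph V) (W : Finset V) : Prop :=
  W.card = 1 ∨ IsTwoConn (G.induce (W : Set V))

def IsBlock {V : Type} (G : SimpleGraph V) (W : Finset V) : Prop :=
  BlockCand G W ∧ ∀ W' : Finset V, W ⊂ W' → ¬ BlockCand G W'

def InSigma (n k : ℕ) (E : Finset (Finset (Fin n))) : Prop :=
  IsGraphEdges n E ∧ ∀ W : Finset (Fin n), IsBlock (graphOf n E) W →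
    W.card = 1 ∨ (k ≤ W.card ∧ (graphOf n E).IsClique (W : Set (Fin n)))

/-- `G` covers `H` in the poset `Σ_{n,k}` ordered by inclusion of edge sets. -/
def SigmaCovers (n k : ℕ) (H G : Finset (Finset (Fin n))) : Prop :=
  InSigma n k H ∧ InSigma n k G ∧ H ⊂ G ∧
    ∀ Z : Finset (Finset (Fin n)), InSigma n k Z → H ⊂ Z → Z ⊂ G → False

/-- the edge set of the complete graph on `Fin n` -/
def completeEdges (n : ℕ) : Finset (Finset (Fin n)) :=
  Finset.powersetCard 2 Finset.univ

/-- the number of connected components of the graph with edge set `E` -/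
noncomputable def numComponents (n : ℕ) (E : Finset (Finset (Fin n))) : ℕ :=
  Nat.card (graphOf n E).ConnectedComponent

/-- the number of blocks with at least two vertices of the graph with edge set `E` -/
noncomputable def numBigBlocks (n : ℕ) (E : Finset (Finset (Fin n))) : ℕ :=
  Set.ncard {W : Finset (Fin n) | IsBlock (graphOf n E) W ∧ 2 ≤ W.card}

open scoped Classical

section Basic

variable {V : Type} [Fintype V] [DecidableEq V]

/-- induce is monotone in the graph. -/
lemma induce_mono_graph' {W : Type} {G G' : SimpleGraph W} (h : G ≤ G') (s : Set W) :
    G.induce s ≤ G'.induce s := by intro a b hadj; exact h hadj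

/-- a graph on a nonempty subsingleton type is connected -/
lemma connected_of_subsingleton {W : Type} [Subsingleton W] [Nonempty W]
    (G : SimpleGraph W) : G.Connected := by
  constructor
  intro u v
  rw [Subsingleton.elim u v]

/-- Iso between double induce and induce on the image. -/
noncomputable def induceInduceIso (G : SimpleGraph V) (s : Set V) (t : Set s) :
    (G.induce s).induce t ≃g G.induce (Subtype.val '' t) where
  toEquiv := (Equiv.Set.image Subtype.val t Subtype.val_injective)
  map_rel_iff' := by
    rintro ⟨⟨x, hx⟩, hxt⟩ ⟨⟨y, hy⟩, hyt⟩
    exact Iff.rfl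

/-- transport `Connected` along an iso -/
lemma connected_iff_of_iso {W W' : Type} {A : SimpleGraph W} {B : SimpleGraph W'}
    (e : A ≃g B) : A.Connected ↔ B.Connected := e.connected_iff

/-- Iso between induced graphs on complements of corresponding vertices. -/
def isoInduceCompl {W W' : Type} {A : SimpleGraph W} {B : SimpleGraph W'}
    (e : A ≃g B) (v : W) :
    A.induce ({v}ᶜ : Set W) ≃g B.induce ({e v}ᶜ : Set W') where
  toEquiv := (e.toEquiv.subtypeEquiv (by
    intro a
    simp only [Set.mem_compl_iff, Set.mem_singleton_iff]
    constructor
    · intro h h'; exact h (e.toEquiv.injective h')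
    · intro h h'; exact h (by rw [h']; rfl)))
  map_rel_iff' := by
    rintro ⟨x, hx⟩ ⟨y, hy⟩
    simpa using e.map_rel_iff'

/-- `IsTwoConn` transports along isos. -/
lemma isTwoConn_iff_of_iso {W W' : Type} [Fintype W] [Fintype W']
    {A : SimpleGraph W} {B : SimpleGraph W'} (e : A ≃g B) :
    IsTwoConn A ↔ IsTwoConn B := by
  have hcard : Fintype.card W = Fintype.card W' := Fintype.card_congr e.toEquiv
  constructor
  · rintro ⟨h1, h2, h3⟩
    refine ⟨hcard ▸ h1, (connected_iff_of_iso e).1 h2, fun v => ?_⟩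
    have := (connected_iff_of_iso (isoInduceCompl e (e.symm v))).1 (h3 (e.symm v))
    rwa [e.apply_symm_apply] at this
  · rintro ⟨h1, h2, h3⟩
    refine ⟨hcard ▸ h1, (connected_iff_of_iso e).2 h2, fun v => ?_⟩
    exact (connected_iff_of_iso (isoInduceCompl e v)).2 (h3 (e v))

end Basic

section Blocks

set_option linter.unusedSectionVars false

variable {V : Type} [Fintype V] [DecidableEq V]

lemma card_coe_set (W : Finset V) : Fintype.card (↑W : Set V) = W.card := by
  simp

lemma isTwoConn_coe_iff (G : SimpleGraph V) (W : Finset V) :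
    IsTwoConn (G.induce (↑W : Set V)) ↔
      2 ≤ W.card ∧ (G.induce (↑W : Set V)).Connected ∧
        ∀ x ∈ W, (G.induce ((↑W : Set V) \ {x})).Connected := by
  have himg : ∀ (x : V) (hx : x ∈ W),
      (Subtype.val '' (({(⟨x, by simpa using hx⟩ : (↑W : Set V))}ᶜ : Set (↑W : Set V))))
        = (↑W : Set V) \ {x} := by
    intro x hx
    ext y
    constructor
    · rintro ⟨⟨z, hz⟩, hz2, rfl⟩
      refine ⟨hz, ?_⟩
      simp only [Set.mem_compl_iff, Set.mem_singleton_iff] at hz2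
      intro hzy
      simp only [Set.mem_singleton_iff] at hzy
      exact hz2 (Subtype.ext hzy)
    · rintro ⟨hy, hyx⟩
      refine ⟨⟨y, hy⟩, ?_, rfl⟩
      simp only [Set.mem_compl_iff, Set.mem_singleton_iff]
      intro hc
      exact hyx (by simpa using congrArg Subtype.val hc)
  constructor
  · rintro ⟨h1, h2, h3⟩
    refine ⟨by simpa using h1, h2, fun x hx => ?_⟩
    have := (connected_iff_of_iso (induceInduceIso G _ _)).1 (h3 ⟨x, by simpa using hx⟩)
    rwa [himg x hx] at this
  · rintro ⟨h1, h2, h3⟩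
    refine ⟨by simpa using h1, h2, fun v => ?_⟩
    obtain ⟨x, hx⟩ := v
    have hxW : x ∈ W := by simpa using hx
    have := h3 x hxW
    rw [← himg x hxW] at this
    exact (connected_iff_of_iso (induceInduceIso G _ _)).2 this

lemma isTwoConn_mono {W : Type} [Fintype W] {A B : SimpleGraph W} (h : A ≤ B) :
    IsTwoConn A → IsTwoConn B := by
  rintro ⟨h1, h2, h3⟩
  exact ⟨h1, h2.mono h, fun v => (h3 v).mono (induce_mono_graph' h _)⟩

lemma blockCand_mono {G G' : SimpleGraph V} (h : G ≤ G') {W : Finset V} :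
    BlockCand G W → BlockCand G' W :=
  Or.imp id (isTwoConn_mono (induce_mono_graph' h _))

lemma graphOf_mono {n : ℕ} {E E' : Finset (Finset (Fin n))} (h : E ⊆ E') :
    graphOf n E ≤ graphOf n E' := by intro a b hadj; rw [graphOf_adj] at hadj ⊢; exact ⟨hadj.1, h hadj.2⟩

lemma exists_isBlock_superset {G : SimpleGraph V} {W : Finset V} (h : BlockCand G W) :
    ∃ W', W ⊆ W' ∧ IsBlock G W' := by
  classical
  set S := Finset.univ.filter (fun W' : Finset V => W ⊆ W' ∧ BlockCand G W') with hS
  have hWS : W ∈ S := by simp [hS, h]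
  obtain ⟨M, hM, hmax⟩ := S.exists_maximal ⟨W, hWS⟩
  rw [hS, Finset.mem_filter] at hM
  refine ⟨M, hM.2.1, hM.2.2, ?_⟩
  intro W'' hss hcand
  exact hss.2 (hmax (by simp [hS, hM.2.1.trans hss.subset, hcand]) hss.subset)

lemma exists_adj_of_connected {W : Type} [Fintype W] {G : SimpleGraph W}
    (h : G.Connected) (hc : 2 ≤ Fintype.card W) (x : W) : ∃ y, G.Adj x y := by
  obtain ⟨y, hy⟩ := Fintype.exists_ne_of_one_lt_card (by omega) x
  obtain ⟨p⟩ := h.preconnected x y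
  cases p with
  | nil => exact absurd rfl hy.symm
  | cons hadj _ => exact ⟨_, hadj⟩

lemma blockCand_pair {G : SimpleGraph V} {u v : V} (h : G.Adj u v) :
    BlockCand G {u, v} := by
  right
  rw [isTwoConn_coe_iff]
  refine ⟨by rw [Finset.card_pair h.ne], ?_, ?_⟩
  · have : (↑({u, v} : Finset V) : Set V) = {u, v} := by simp
    rw [this]
    exact SimpleGraph.induce_pair_connected_of_adj h
  · intro x hx
    have hx' : x = u ∨ x = v := by simpa using hx
    have key : ∀ w : V, (G.induce ({w} : Set V)).Connected := by
      intro w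
      haveI : Unique ({w} : Set V) := Set.uniqueSingleton w
      exact connected_of_subsingleton _
    rcases hx' with rfl | rfl
    · have : (↑({x, v} : Finset V) : Set V) \ {x} = {v} := by
        ext y; simp only [Finset.coe_insert, Finset.coe_singleton, Set.mem_diff,
          Set.mem_insert_iff, Set.mem_singleton_iff]
        constructor
        · rintro ⟨h1 | h1, h2⟩ <;> tauto
        · rintro rfl; exact ⟨Or.inr rfl, h.ne'⟩
      rw [this]; exact key v
    · have : (↑({u, x} : Finset V) : Set V) \ {x} = {u} := by
        ext y; simp only [Finset.coe_insert, Finset.coe_singleton, Set.mem_diff,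
          Set.mem_insert_iff, Set.mem_singleton_iff]
        constructor
        · rintro ⟨h1 | h1, h2⟩ <;> tauto
        · rintro rfl; exact ⟨Or.inl rfl, h.ne⟩
      rw [this]; exact key u

end Blocks

section Blocks2

set_option linter.unusedSectionVars false

variable {V : Type} [Fintype V] [DecidableEq V]

lemma blockCand_card_two_le {G : SimpleGraph V} {W : Finset V}
    (h : BlockCand G W) (h2 : W.card ≠ 1) : 2 ≤ W.card := by
  rcases h with h | h
  · omega
  · have := h.1; rwa [card_coe_set] at this

lemma blockCand_union {G : SimpleGraph V} {W1 W2 : Finset V}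
    (h1 : BlockCand G W1) (h2 : BlockCand G W2) (hint : 2 ≤ (W1 ∩ W2).card) :
    BlockCand G (W1 ∪ W2) := by
  have c1 : 2 ≤ W1.card := le_trans hint (Finset.card_le_card Finset.inter_subset_left)
  have c2 : 2 ≤ W2.card := le_trans hint (Finset.card_le_card Finset.inter_subset_right)
  have t1 := (isTwoConn_coe_iff G W1).1 (h1.resolve_left (show ¬ W1.card = 1 by omega))
  have t2 := (isTwoConn_coe_iff G W2).1 (h2.resolve_left (show ¬ W2.card = 1 by omega))
  have hne : ∀ x : V, ((↑(W1 ∩ W2) : Set V) \ {x}).Nonempty := by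
    intro x
    obtain ⟨y, hy, hyx⟩ := Finset.exists_mem_ne (show 1 < (W1 ∩ W2).card by omega) x
    exact ⟨y, by simpa using hy, by simpa using hyx⟩
  right
  rw [isTwoConn_coe_iff]
  refine ⟨le_trans c1 (Finset.card_le_card Finset.subset_union_left), ?_, ?_⟩
  · rw [Finset.coe_union]
    refine SimpleGraph.induce_union_connected t1.2.1.preconnected t2.2.1.preconnected ?_
    obtain ⟨y, hy⟩ := Finset.card_pos.1 (show 0 < (W1 ∩ W2).card by omega)
    exact ⟨y, by simpa using (Finset.mem_inter.1 hy)⟩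
  · intro x hx
    rw [Finset.coe_union, Set.union_diff_distrib]
    have r : ∀ (W : Finset V), BlockCand G W → 2 ≤ W.card →
        (G.induce ((↑W : Set V) \ {x})).Connected := by
      intro W hW hc
      rcases hW with h1 | t0
      · omega
      have t := (isTwoConn_coe_iff G W).1 t0
      by_cases hxW : x ∈ W
      · exact t.2.2 x hxW
      · rw [Set.diff_singleton_eq_self (by simpa using hxW)]
        exact t.2.1
    refine SimpleGraph.induce_union_connected (r W1 h1 c1).preconnected (r W2 h2 c2).preconnected ?_
    obtain ⟨y, hy, hyx⟩ := hne x
    have hy' : y ∈ W1 ∩ W2 := by simpa using hy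
    simp only [Finset.mem_inter] at hy'
    exact ⟨y, ⟨⟨by simpa using hy'.1, hyx⟩, ⟨by simpa using hy'.2, hyx⟩⟩⟩

lemma isBlock_inter_card_le_one {G : SimpleGraph V} {W1 W2 : Finset V}
    (b1 : IsBlock G W1) (b2 : IsBlock G W2) (hne : W1 ≠ W2) :
    (W1 ∩ W2).card ≤ 1 := by
  by_contra h
  have hu := blockCand_union b1.1 b2.1 (by omega)
  rcases eq_or_ne W1 (W1 ∪ W2) with he | hne'
  · have h21 : W2 ⊆ W1 := he ▸ Finset.subset_union_right
    exact b2.2 W1 (Finset.ssubset_iff_subset_ne.2 ⟨h21, fun hc => hne hc.symm⟩) b1.1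
  · exact b1.2 (W1 ∪ W2)
      (Finset.ssubset_iff_subset_ne.2 ⟨Finset.subset_union_left, hne'⟩) hu

lemma exists_unique_block_of_adj {G : SimpleGraph V} {u v : V} (h : G.Adj u v) :
    ∃ W, IsBlock G W ∧ u ∈ W ∧ v ∈ W ∧
      ∀ W', IsBlock G W' → u ∈ W' → v ∈ W' → W' = W := by
  obtain ⟨W, hsub, hb⟩ := exists_isBlock_superset (blockCand_pair h)
  refine ⟨W, hb, hsub (by simp), hsub (by simp), ?_⟩
  intro W' hb' hu hv
  by_contra hne
  have hle := isBlock_inter_card_le_one hb' hb hne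
  have hss : ({u, v} : Finset V) ⊆ W' ∩ W := by
    intro x hx
    rcases Finset.mem_insert.1 hx with rfl | hx
    · exact Finset.mem_inter.2 ⟨hu, hsub (by simp)⟩
    · rw [Finset.mem_singleton] at hx; subst hx
      exact Finset.mem_inter.2 ⟨hv, hsub (by simp)⟩
  have := Finset.card_le_card hss
  rw [Finset.card_pair h.ne] at this
  omega

lemma no_singleton_block {n : ℕ} {E : Finset (Finset (Fin n))}
    (hconn : (graphOf n E).Connected) (hn : 2 ≤ n) {W : Finset (Fin n)}
    (hW : IsBlock (graphOf n E) W) : 2 ≤ W.card := by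
  rcases Nat.lt_or_ge W.card 2 with h | h
  · exfalso
    have h1 : W.card = 1 := by
      rcases hW.1 with h' | h'
      · exact h'
      · have := h'.1; rw [card_coe_set] at this; omega
    obtain ⟨v, hv⟩ := Finset.card_eq_one.1 h1
    subst hv
    obtain ⟨y, hy⟩ := exists_adj_of_connected hconn (by simpa using hn) v
    refine hW.2 {v, y} ?_ (blockCand_pair hy)
    rw [Finset.ssubset_iff_subset_ne]
    constructor
    · intro x hx; rw [Finset.mem_singleton] at hx; subst hx; simp
    · intro hc
      have : y ∈ ({v} : Finset (Fin n)) := by rw [hc]; simp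
      rw [Finset.mem_singleton] at this
      exact hy.ne' this
  · exact h

lemma twoConn_subset {n : ℕ} {F : Finset (Finset (Fin n))} {W : Finset (Fin n)}
    (hF : ∀ e ∈ F, e ⊆ W) {B : Finset (Fin n)}
    (hB : IsTwoConn ((graphOf n F).induce (↑B : Set (Fin n)))) : B ⊆ W := by
  intro x hx
  have hc : 2 ≤ Fintype.card (↑B : Set (Fin n)) := hB.1
  obtain ⟨y, hy⟩ := exists_adj_of_connected hB.2.1 hc (⟨x, by simpa using hx⟩ : (↑B : Set (Fin n)))
  have : ({x, (y : Fin n)} : Finset (Fin n)) ∈ F := (graphOf_adj.1 hy).2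
  exact hF _ this (by simp)

lemma induce_eq_of_agree {W : Type} {A B : SimpleGraph W} (s : Set W)
    (h : ∀ x ∈ s, ∀ y ∈ s, (A.Adj x y ↔ B.Adj x y)) : A.induce s = B.induce s := by
  ext a b
  exact h a a.2 b b.2

lemma blockCand_congr {A B : SimpleGraph V} {W : Finset V}
    (h : ∀ x ∈ W, ∀ y ∈ W, (A.Adj x y ↔ B.Adj x y)) :
    BlockCand A W ↔ BlockCand B W := by
  unfold BlockCand
  rw [induce_eq_of_agree (↑W : Set V) (by simpa using h)]

end Blocks2

section Restrict

set_option linter.unusedSectionVars false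

variable {n k : ℕ}

/-- edges of `H` lying inside `W` -/
def resE {n : ℕ} (H : Finset (Finset (Fin n))) (W : Finset (Fin n)) :
    Finset (Finset (Fin n)) := H.filter (fun e => e ⊆ W)

lemma mem_resE {H W : Finset _} {e : Finset (Fin n)} :
    e ∈ resE H W ↔ e ∈ H ∧ e ⊆ W := Finset.mem_filter

lemma resE_subset (H W : Finset _) : resE (n := n) H W ⊆ H := Finset.filter_subset _ _

lemma resE_mono {H H' : Finset (Finset (Fin n))} (h : H ⊆ H') (W : Finset (Fin n)) :
    resE H W ⊆ resE H' W :=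
  Finset.filter_subset_filter _ h

lemma agree_on_block {H W : Finset _} :
    ∀ x ∈ W, ∀ y ∈ W,
      ((graphOf n (resE H W)).Adj x y ↔ (graphOf n H).Adj x y) := by
  intro x hx y hy
  rw [graphOf_adj, graphOf_adj]
  constructor
  · rintro ⟨hne, he⟩
    exact ⟨hne, (mem_resE.1 he).1⟩
  · rintro ⟨hne, he⟩
    refine ⟨hne, mem_resE.2 ⟨he, ?_⟩⟩
    intro z hz
    rcases Finset.mem_insert.1 hz with rfl | hz
    · exact hx
    · rw [Finset.mem_singleton] at hz; subst hz; exact hy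

lemma block_unique_of_two_le {G : Finset (Finset (Fin n))} {W W' B : Finset (Fin n)}
    (bW : IsBlock (graphOf n G) W) (bW' : IsBlock (graphOf n G) W')
    (hB2 : 2 ≤ B.card) (h1 : B ⊆ W) (h2 : B ⊆ W') : W = W' := by
  by_contra hne
  have := isBlock_inter_card_le_one bW bW' hne
  have hsub : B ⊆ W ∩ W' := fun x hx => Finset.mem_inter.2 ⟨h1 hx, h2 hx⟩
  have := Finset.card_le_card hsub
  omega

lemma isBlock_two_le_card {G : SimpleGraph (Fin n)} {B : Finset (Fin n)}
    (hB : IsBlock G B) (h1 : B.card ≠ 1) : 2 ≤ B.card :=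
  blockCand_card_two_le hB.1 h1

lemma resE_edges_subset {H W : Finset _} : ∀ e ∈ resE (n := n) H W, e ⊆ W :=
  fun _ he => (mem_resE.1 he).2

/-- Blocks of the restriction of `H` to a block `W` of `G` are exactly the blocks
of `H` contained in `W` (for blocks with at least two vertices). -/
lemma isBlock_res_iff {G : Finset (Finset (Fin n))}
    {H : Finset (Finset (Fin n))} (hHG : H ⊆ G) {W : Finset (Fin n)}
    (hW : IsBlock (graphOf n G) W) {B : Finset (Fin n)} (hB2 : 2 ≤ B.card) :
    IsBlock (graphOf n (resE H W)) B ↔ (IsBlock (graphOf n H) B ∧ B ⊆ W) := by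
  constructor
  · rintro ⟨cand, hmax⟩
    have htc : IsTwoConn ((graphOf n (resE H W)).induce (↑B : Set (Fin n))) :=
      cand.resolve_left (show ¬ B.card = 1 by omega)
    have hBW : B ⊆ W := twoConn_subset resE_edges_subset htc
    have candH : BlockCand (graphOf n H) B :=
      (blockCand_congr (fun x hx y hy => agree_on_block x (hBW hx) y (hBW hy))).1 cand
    refine ⟨⟨candH, ?_⟩, hBW⟩
    intro C hBC hcandC
    obtain ⟨W', hCW', hbW'⟩ :=
      exists_isBlock_superset (blockCand_mono (graphOf_mono hHG) hcandC)
    have hWW : W = W' :=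
      block_unique_of_two_le hW hbW' hB2 hBW (hBC.subset.trans hCW')
    have hCW : C ⊆ W := hWW ▸ hCW'
    exact hmax C hBC
      ((blockCand_congr (fun x hx y hy => agree_on_block x (hCW hx) y (hCW hy))).2 hcandC)
  · rintro ⟨⟨candH, hmaxH⟩, hBW⟩
    refine ⟨(blockCand_congr (fun x hx y hy => agree_on_block x (hBW hx) y (hBW hy))).2 candH, ?_⟩
    intro C hBC hcandC
    exact hmaxH C hBC (blockCand_mono (graphOf_mono (resE_subset H W)) hcandC)

/-- A graph `H ⊆ G` is in `Σ` iff each of its restrictions to blocks of `G` is. -/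
lemma inSigma_res_iff {G : Finset (Finset (Fin n))} (hG : InSigma n k G)
    {H : Finset (Finset (Fin n))} (hHG : H ⊆ G) :
    InSigma n k H ↔ ∀ W : Finset (Fin n), IsBlock (graphOf n G) W →
      InSigma n k (resE H W) := by
  have hedges : IsGraphEdges n H := fun e he => hG.1 e (hHG he)
  constructor
  · intro hH W hW
    refine ⟨fun e he => hedges e (resE_subset H W he), ?_⟩
    intro B hB
    rcases eq_or_ne B.card 1 with h1 | h1
    · exact Or.inl h1
    have hB2 : 2 ≤ B.card := isBlock_two_le_card hB h1
    obtain ⟨hBH, hBW⟩ := (isBlock_res_iff hHG hW hB2).1 hB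
    rcases hH.2 B hBH with h | ⟨hk, hclique⟩
    · omega
    refine Or.inr ⟨hk, ?_⟩
    intro x hx y hy hne
    exact (agree_on_block x (hBW hx) y (hBW hy)).2 (hclique hx hy hne)
  · intro hres
    refine ⟨hedges, ?_⟩
    intro B hB
    rcases eq_or_ne B.card 1 with h1 | h1
    · exact Or.inl h1
    have hB2 : 2 ≤ B.card := isBlock_two_le_card hB h1
    obtain ⟨W, hBW, hW⟩ :=
      exists_isBlock_superset (blockCand_mono (graphOf_mono hHG) hB.1)
    have hBres : IsBlock (graphOf n (resE H W)) B :=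
      (isBlock_res_iff hHG hW hB2).2 ⟨hB, hBW⟩
    rcases (hres W hW).2 B hBres with h | ⟨hk, hclique⟩
    · omega
    exact Or.inr ⟨hk, hclique.mono (graphOf_mono (resE_subset H W))⟩

/-- each edge of a subgraph of `G` lies in some block of `G`. -/
lemma exists_block_of_edge {G : Finset (Finset (Fin n))} (hG : InSigma n k G)
    {e : Finset (Fin n)} (he : e ∈ G) :
    ∃ W : Finset (Fin n), IsBlock (graphOf n G) W ∧ e ⊆ W := by
  obtain ⟨u, v, huv, rfl⟩ := Finset.card_eq_two.1 (hG.1 e he)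
  obtain ⟨W, hW, hu, hv, -⟩ := exists_unique_block_of_adj (show (graphOf n G).Adj u v from graphOf_adj.2 ⟨huv, he⟩)
  refine ⟨W, hW, ?_⟩
  intro z hz
  rcases Finset.mem_insert.1 hz with rfl | hz
  · exact hu
  · rw [Finset.mem_singleton] at hz; subst hz; exact hv

/-- an edge lies in at most one block. -/
lemma edge_block_unique {G : Finset (Finset (Fin n))} (hG : InSigma n k G)
    {W W' e : Finset (Fin n)} (hW : IsBlock (graphOf n G) W)
    (hW' : IsBlock (graphOf n G) W') (he : e.card = 2)
    (h1 : e ⊆ W) (h2 : e ⊆ W') : W = W' :=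
  block_unique_of_two_le hW hW' (by omega) h1 h2

/-- a subgraph of `G` is the union of its restrictions to the blocks of `G`. -/
lemma eq_biUnion_resE {G : Finset (Finset (Fin n))} (hG : InSigma n k G)
    {H : Finset (Finset (Fin n))} (hHG : H ⊆ G) :
    H = (Finset.univ.filter (fun W => IsBlock (graphOf n G) W)).biUnion
      (fun W => resE H W) := by
  ext e
  simp only [Finset.mem_biUnion, Finset.mem_filter, Finset.mem_univ, true_and]
  constructor
  · intro he
    obtain ⟨W, hW, heW⟩ := exists_block_of_edge hG (hHG he)
    exact ⟨W, hW, mem_resE.2 ⟨he, heW⟩⟩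
  · rintro ⟨W, -, he⟩
    exact (mem_resE.1 he).1

/-- the restriction of `G` itself to one of its blocks is the complete set of pairs. -/
lemma resE_self_eq_powerset {G : Finset (Finset (Fin n))} (hG : InSigma n k G)
    (hconn : (graphOf n G).Connected) (hn : 2 ≤ n)
    {W : Finset (Fin n)} (hW : IsBlock (graphOf n G) W) :
    resE G W = Finset.powersetCard 2 W := by
  have h2 : 2 ≤ W.card := no_singleton_block hconn hn hW
  have hclique : (graphOf n G).IsClique (↑W : Set (Fin n)) := by
    rcases hG.2 W hW with h | h
    · omega
    · exact h.2
  ext e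
  rw [mem_resE, Finset.mem_powersetCard]
  constructor
  · intro ⟨he, hew⟩
    exact ⟨hew, hG.1 e he⟩
  · rintro ⟨hew, hec⟩
    obtain ⟨u, v, huv, rfl⟩ := Finset.card_eq_two.1 hec
    have hu : u ∈ W := hew (by simp)
    have hv : v ∈ W := hew (by simp)
    refine ⟨?_, hew⟩
    exact (graphOf_adj.1 (hclique (by simpa using hu) (by simpa using hv) huv)).2

end Restrict

section Transport

set_option linter.unusedSectionVars false

variable {n : ℕ}

/-- the canonical equivalence between a finset of `Fin n` and `Fin` of its card -/
noncomputable def eqv (W : Finset (Fin n)) : {x // x ∈ W} ≃ Fin W.card :=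
  (W.orderIsoOfFin rfl).toEquiv.symm

/-- push a finset of `Fin n` (intersected with `W`) down to `Fin W.card` -/
noncomputable def mapE (W : Finset (Fin n)) (B : Finset (Fin n)) : Finset (Fin W.card) :=
  (B ∩ W).attach.image (fun x => eqv W ⟨x.1, (Finset.mem_inter.1 x.2).2⟩)

/-- pull a finset of `Fin W.card` back up to `Fin n` -/
noncomputable def invE (W : Finset (Fin n)) (B' : Finset (Fin W.card)) : Finset (Fin n) :=
  B'.image (fun i => ((eqv W).symm i).1)

lemma mem_mapE {W B : Finset (Fin n)} {i : Fin W.card} :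
    i ∈ mapE W B ↔ ((eqv W).symm i).1 ∈ B := by
  unfold mapE
  simp only [Finset.mem_image, Finset.mem_attach, true_and, Subtype.exists]
  constructor
  · rintro ⟨x, hx, rfl⟩
    rw [Equiv.symm_apply_apply]
    exact (Finset.mem_inter.1 hx).1
  · intro h
    refine ⟨((eqv W).symm i).1, Finset.mem_inter.2 ⟨h, ((eqv W).symm i).2⟩, ?_⟩
    rw [show (⟨((eqv W).symm i).1, _⟩ : {x // x ∈ W}) = (eqv W).symm i from Subtype.ext rfl,
      Equiv.apply_symm_apply]

lemma mem_invE {W : Finset (Fin n)} {B' : Finset (Fin W.card)} {x : Fin n} :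
    x ∈ invE W B' ↔ ∃ h : x ∈ W, eqv W ⟨x, h⟩ ∈ B' := by
  unfold invE
  simp only [Finset.mem_image]
  constructor
  · rintro ⟨i, hi, rfl⟩
    refine ⟨((eqv W).symm i).2, ?_⟩
    rw [show (⟨((eqv W).symm i).1, _⟩ : {x // x ∈ W}) = (eqv W).symm i from Subtype.ext rfl,
      Equiv.apply_symm_apply]
    exact hi
  · rintro ⟨h, hmem⟩
    exact ⟨eqv W ⟨x, h⟩, hmem, by rw [Equiv.symm_apply_apply]⟩

lemma invE_subset_W (W : Finset (Fin n)) (B' : Finset (Fin W.card)) : invE W B' ⊆ W := by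
  intro x hx
  obtain ⟨h, -⟩ := mem_invE.1 hx
  exact h

lemma invE_mapE {W B : Finset (Fin n)} (h : B ⊆ W) : invE W (mapE W B) = B := by
  ext x
  rw [mem_invE]
  constructor
  · rintro ⟨hx, hm⟩
    have := mem_mapE.1 hm
    rwa [Equiv.symm_apply_apply] at this
  · intro hx
    refine ⟨h hx, ?_⟩
    rw [mem_mapE, Equiv.symm_apply_apply]
    exact hx

lemma mapE_invE {W : Finset (Fin n)} (B' : Finset (Fin W.card)) : mapE W (invE W B') = B' := by
  ext i
  rw [mem_mapE, mem_invE]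
  constructor
  · rintro ⟨h, hm⟩
    rwa [show (⟨((eqv W).symm i).1, h⟩ : {x // x ∈ W}) = (eqv W).symm i from Subtype.ext rfl,
      Equiv.apply_symm_apply] at hm
  · intro hi
    refine ⟨((eqv W).symm i).2, ?_⟩
    rwa [show (⟨((eqv W).symm i).1, _⟩ : {x // x ∈ W}) = (eqv W).symm i from Subtype.ext rfl,
      Equiv.apply_symm_apply]

lemma mapE_mono {W B C : Finset (Fin n)} (h : B ⊆ C) : mapE W B ⊆ mapE W C := by
  intro i hi
  rw [mem_mapE] at hi ⊢
  exact h hi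

lemma invE_mono {W : Finset (Fin n)} {B' C' : Finset (Fin W.card)} (h : B' ⊆ C') :
    invE W B' ⊆ invE W C' := by
  intro x hx
  rw [mem_invE] at hx ⊢
  obtain ⟨hw, hm⟩ := hx
  exact ⟨hw, h hm⟩

lemma card_invE {W : Finset (Fin n)} (B' : Finset (Fin W.card)) :
    (invE W B').card = B'.card := by
  have h1 : (invE W B').card ≤ B'.card := Finset.card_image_le
  have h2 : B'.card ≤ (invE W B').card := by
    conv_lhs => rw [← mapE_invE B']
    refine le_trans Finset.card_image_le ?_
    rw [Finset.card_attach]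
    exact Finset.card_le_card Finset.inter_subset_left
  omega

lemma card_mapE {W B : Finset (Fin n)} (h : B ⊆ W) : (mapE W B).card = B.card := by
  have := card_invE (W := W) (mapE W B)
  rw [invE_mapE h] at this
  omega

end Transport

section Tau

set_option linter.unusedSectionVars false

variable {n : ℕ}

noncomputable def tauE (W : Finset (Fin n)) (F : Finset (Finset (Fin n))) :
    Finset (Finset (Fin W.card)) := F.image (mapE W)

noncomputable def sigE (W : Finset (Fin n)) (F' : Finset (Finset (Fin W.card))) :
    Finset (Finset (Fin n)) := F'.image (invE W)

lemma tauE_sigE (W : Finset (Fin n)) (F' : Finset (Finset (Fin W.card))) :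
    tauE W (sigE W F') = F' := by
  unfold tauE sigE
  rw [Finset.image_image]
  rw [show mapE W ∘ invE W = id from funext (fun e' => mapE_invE e')]
  exact Finset.image_id

lemma sigE_tauE {W : Finset (Fin n)} {F : Finset (Finset (Fin n))}
    (hF : ∀ e ∈ F, e ⊆ W) : sigE W (tauE W F) = F := by
  unfold tauE sigE
  rw [Finset.image_image]
  ext e
  simp only [Finset.mem_image, Function.comp_apply]
  constructor
  · rintro ⟨a, ha, rfl⟩
    rwa [invE_mapE (hF a ha)]
  · intro he
    exact ⟨e, he, invE_mapE (hF e he)⟩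

lemma tauE_mono {W : Finset (Fin n)} {F F' : Finset (Finset (Fin n))} (h : F ⊆ F') :
    tauE W F ⊆ tauE W F' := Finset.image_subset_image h

lemma sigE_mono {W : Finset (Fin n)} {F F' : Finset (Finset (Fin W.card))} (h : F ⊆ F') :
    sigE W F ⊆ sigE W F' := Finset.image_subset_image h

lemma tauE_empty_iff {W : Finset (Fin n)} {F : Finset (Finset (Fin n))} :
    tauE W F = ∅ ↔ F = ∅ := by
  unfold tauE; simp

lemma sigE_edges {W : Finset (Fin n)} {F' : Finset (Finset (Fin W.card))}
    (hF' : ∀ e ∈ F', e.card = 2) :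
    ∀ e ∈ sigE W F', e ⊆ W ∧ e.card = 2 := by
  intro e he
  obtain ⟨e', he', rfl⟩ := Finset.mem_image.1 he
  exact ⟨invE_subset_W W e', by rw [card_invE]; exact hF' e' he'⟩

lemma mapE_pair {W : Finset (Fin n)} {x y : Fin n} (hx : x ∈ W) (hy : y ∈ W) :
    mapE W {x, y} = {eqv W ⟨x, hx⟩, eqv W ⟨y, hy⟩} := by
  ext i
  rw [mem_mapE]
  simp only [Finset.mem_insert, Finset.mem_singleton]
  constructor
  · rintro (h | h)
    · left
      rw [show (⟨x, hx⟩ : {a // a ∈ W}) = (eqv W).symm i from Subtype.ext h.symm,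
        Equiv.apply_symm_apply]
    · right
      rw [show (⟨y, hy⟩ : {a // a ∈ W}) = (eqv W).symm i from Subtype.ext h.symm,
        Equiv.apply_symm_apply]
  · rintro (rfl | rfl)
    · left; rw [Equiv.symm_apply_apply]
    · right; rw [Equiv.symm_apply_apply]

lemma adj_tau {W : Finset (Fin n)} {F : Finset (Finset (Fin n))}
    (hF : ∀ e ∈ F, e ⊆ W) (a b : {x // x ∈ W}) :
    (graphOf n F).Adj a.1 b.1 ↔
      (graphOf W.card (tauE W F)).Adj (eqv W a) (eqv W b) := by
  rw [graphOf_adj, graphOf_adj]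
  constructor
  · rintro ⟨hne, he⟩
    refine ⟨fun hc => hne (Subtype.ext_iff.1 ((eqv W).injective hc)), ?_⟩
    have : ({eqv W a, eqv W b} : Finset (Fin W.card)) = mapE W {a.1, b.1} := by
      rw [mapE_pair a.2 b.2]
    rw [this]
    exact Finset.mem_image_of_mem _ he
  · rintro ⟨hne, he⟩
    refine ⟨fun hc => hne (by rw [Subtype.ext_iff.2 hc]), ?_⟩
    obtain ⟨e, heF, hmap⟩ := Finset.mem_image.1 he
    have : invE W ({eqv W a, eqv W b} : Finset (Fin W.card)) = e := by
      rw [← hmap, invE_mapE (hF e heF)]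
    rw [← this] at heF
    unfold invE at heF
    rwa [Finset.image_insert, Finset.image_singleton, Equiv.symm_apply_apply,
      Equiv.symm_apply_apply] at heF

/-- iso between the induced graph on `B ⊆ W` and the induced graph on its image. -/
noncomputable def mapIso {W : Finset (Fin n)} {F : Finset (Finset (Fin n))}
    (hF : ∀ e ∈ F, e ⊆ W) {B : Finset (Fin n)} (hBW : B ⊆ W) :
    (graphOf n F).induce (↑B : Set (Fin n)) ≃g
      (graphOf W.card (tauE W F)).induce (↑(mapE W B) : Set (Fin W.card)) where
  toEquiv :=
    { toFun := fun a => ⟨eqv W ⟨a.1, hBW a.2⟩, by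
        simp only [Finset.mem_coe]
        rw [mem_mapE, Equiv.symm_apply_apply]
        exact a.2⟩
      invFun := fun b => ⟨((eqv W).symm b.1).1, mem_mapE.1 b.2⟩
      left_inv := fun a => by
        apply Subtype.ext
        show (((eqv W).symm (eqv W ⟨a.1, hBW a.2⟩)).1 : Fin n) = a.1
        rw [Equiv.symm_apply_apply]
      right_inv := fun b => by
        apply Subtype.ext
        show (eqv W ⟨((eqv W).symm b.1).1, _⟩ : Fin W.card) = b.1
        rw [show (⟨((eqv W).symm b.1).1, _⟩ : {x // x ∈ W}) = (eqv W).symm b.1 from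
          Subtype.ext rfl, Equiv.apply_symm_apply] }
  map_rel_iff' := by
    rintro ⟨x, hx⟩ ⟨y, hy⟩
    exact (adj_tau hF ⟨x, hBW hx⟩ ⟨y, hBW hy⟩).symm

lemma blockCand_tau {W : Finset (Fin n)} {F : Finset (Finset (Fin n))}
    (hF : ∀ e ∈ F, e ⊆ W) {B : Finset (Fin n)} (hBW : B ⊆ W) :
    BlockCand (graphOf n F) B ↔ BlockCand (graphOf W.card (tauE W F)) (mapE W B) := by
  unfold BlockCand
  rw [card_mapE hBW]
  have := isTwoConn_iff_of_iso (mapIso hF hBW)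
  tauto

lemma isBlock_tau {W : Finset (Fin n)} {F : Finset (Finset (Fin n))}
    (hF : ∀ e ∈ F, e ⊆ W) {B : Finset (Fin n)} (hBW : B ⊆ W) (hB2 : 2 ≤ B.card) :
    IsBlock (graphOf n F) B ↔ IsBlock (graphOf W.card (tauE W F)) (mapE W B) := by
  constructor
  · rintro ⟨cand, hmax⟩
    refine ⟨(blockCand_tau hF hBW).1 cand, ?_⟩
    intro C' hC' hcandC'
    have hCW : invE W C' ⊆ W := invE_subset_W W C'
    have hsub : B ⊆ invE W C' := by
      rw [← invE_mapE hBW]; exact invE_mono hC'.subset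
    have hne : B ≠ invE W C' := by
      intro hc
      apply hC'.ne
      rw [hc, mapE_invE]
    refine hmax (invE W C') (Finset.ssubset_iff_subset_ne.2 ⟨hsub, hne⟩) ?_
    rw [blockCand_tau hF hCW, mapE_invE]
    exact hcandC'
  · rintro ⟨cand, hmax⟩
    refine ⟨(blockCand_tau hF hBW).2 cand, ?_⟩
    intro C hC hcandC
    have hC2 : 2 ≤ C.card := le_trans hB2 (Finset.card_le_card hC.subset)
    have hCW : C ⊆ W := by
      rcases hcandC with h1 | h1
      · omega
      · exact twoConn_subset hF h1
    refine hmax (mapE W C) (Finset.ssubset_iff_subset_ne.2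
      ⟨mapE_mono hC.subset, ?_⟩) ((blockCand_tau hF hCW).1 hcandC)
    intro hc
    apply hC.ne
    rw [← invE_mapE hBW, ← invE_mapE hCW, hc]

lemma clique_tau {W : Finset (Fin n)} {F : Finset (Finset (Fin n))}
    (hF : ∀ e ∈ F, e ⊆ W) {B : Finset (Fin n)} (hBW : B ⊆ W) :
    (graphOf n F).IsClique (↑B : Set (Fin n)) ↔
      (graphOf W.card (tauE W F)).IsClique (↑(mapE W B) : Set (Fin W.card)) := by
  constructor
  · intro h i hi j hj hne
    simp only [Finset.mem_coe] at hi hj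
    have hxi := mem_mapE.1 hi
    have hxj := mem_mapE.1 hj
    have hxne : (((eqv W).symm i).1 : Fin n) ≠ ((eqv W).symm j).1 := by
      intro hc
      exact hne (by
        rw [← Equiv.apply_symm_apply (eqv W) i, ← Equiv.apply_symm_apply (eqv W) j]
        exact congrArg (eqv W) (Subtype.ext hc))
    have := (adj_tau hF ((eqv W).symm i) ((eqv W).symm j)).1
      (h (by simpa using hxi) (by simpa using hxj) hxne)
    rwa [Equiv.apply_symm_apply, Equiv.apply_symm_apply] at this
  · intro h x hx y hy hne
    simp only [Finset.mem_coe] at hx hy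
    refine (adj_tau hF ⟨x, hBW hx⟩ ⟨y, hBW hy⟩).2 ?_
    have hi : eqv W ⟨x, hBW hx⟩ ∈ mapE W B := by
      rw [mem_mapE, Equiv.symm_apply_apply]; exact hx
    have hj : eqv W ⟨y, hBW hy⟩ ∈ mapE W B := by
      rw [mem_mapE, Equiv.symm_apply_apply]; exact hy
    refine h (by simpa using hi) (by simpa using hj) ?_
    intro hc
    exact hne (Subtype.ext_iff.1 ((eqv W).injective hc))

lemma inSigma_tau_iff {k : ℕ} {W : Finset (Fin n)} {F : Finset (Finset (Fin n))}
    (hF : ∀ e ∈ F, e ⊆ W ∧ e.card = 2) :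
    InSigma n k F ↔ InSigma W.card k (tauE W F) := by
  have hFsub : ∀ e ∈ F, e ⊆ W := fun e he => (hF e he).1
  constructor
  · rintro ⟨hedges, hblocks⟩
    constructor
    · intro e' he'
      obtain ⟨e, he, rfl⟩ := Finset.mem_image.1 he'
      rw [card_mapE (hFsub e he)]
      exact (hF e he).2
    · intro B' hB'
      rcases eq_or_ne B'.card 1 with h1 | h1
      · exact Or.inl h1
      have hB'2 : 2 ≤ B'.card := isBlock_two_le_card hB' h1
      set B := invE W B' with hB
      have hBW : B ⊆ W := invE_subset_W W B'
      have hcard : B.card = B'.card := card_invE B'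
      have hmap : mapE W B = B' := mapE_invE B'
      have hBblock : IsBlock (graphOf n F) B := by
        rw [isBlock_tau hFsub hBW (by omega), hmap]
        exact hB'
      rcases hblocks B hBblock with h | ⟨hk, hclique⟩
      · omega
      refine Or.inr ⟨by omega, ?_⟩
      rw [← hmap]
      exact (clique_tau hFsub hBW).1 hclique
  · rintro ⟨hedges, hblocks⟩
    constructor
    · intro e he
      have := hedges (mapE W e) (Finset.mem_image_of_mem _ he)
      rwa [card_mapE (hFsub e he)] at this
    · intro B hB
      rcases eq_or_ne B.card 1 with h1 | h1
      · exact Or.inl h1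
      have hB2 : 2 ≤ B.card := isBlock_two_le_card hB h1
      have hBW : B ⊆ W := by
        rcases hB.1 with hc | hc
        · omega
        · exact twoConn_subset hFsub hc
      have := hblocks (mapE W B) ((isBlock_tau hFsub hBW hB2).1 hB)
      rcases this with h | ⟨hk, hclique⟩
      · rw [card_mapE hBW] at h; omega
      rw [card_mapE hBW] at hk
      exact Or.inr ⟨hk, (clique_tau hFsub hBW).2 hclique⟩

lemma tauE_powersetCard (W : Finset (Fin n)) :
    tauE W (Finset.powersetCard 2 W) = completeEdges W.card := by
  ext e'
  unfold tauE completeEdges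
  simp only [Finset.mem_image, Finset.mem_powersetCard]
  constructor
  · rintro ⟨e, ⟨hew, hec⟩, rfl⟩
    exact ⟨Finset.subset_univ _, by rw [card_mapE hew]; exact hec⟩
  · rintro ⟨-, hec⟩
    exact ⟨invE W e', ⟨invE_subset_W W e', by rw [card_invE]; exact hec⟩, mapE_invE e'⟩

end Tau

section Main

set_option linter.unusedSectionVars false

variable {n k : ℕ} (μ : ∀ m : ℕ, Finset (Finset (Fin m)) → ℤ)

noncomputable def blocksOf (n : ℕ) (G : Finset (Finset (Fin n))) : Finset (Finset (Fin n)) :=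
  Finset.univ.filter (fun W => IsBlock (graphOf n G) W)

lemma mem_blocksOf' {G : Finset (Finset (Fin n))} {W : Finset (Fin n)} :
    W ∈ blocksOf n G ↔ IsBlock (graphOf n G) W := by
  unfold blocksOf
  simp

noncomputable def nu (n : ℕ) (μ : ∀ m : ℕ, Finset (Finset (Fin m)) → ℤ)
    (G F : Finset (Finset (Fin n))) : ℤ :=
  ∏ W ∈ blocksOf n G, μ W.card (tauE W (resE F W))

lemma resE_edge_prop {G H W : Finset _} (hG : InSigma n k G) (hHG : H ⊆ G) :
    ∀ e ∈ resE (n := n) H W, e ⊆ W ∧ e.card = 2 :=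
  fun e he => ⟨(mem_resE.1 he).2, hG.1 e (hHG (resE_subset H W he))⟩

lemma tau_res_inSigma {G H W : Finset _} (hG : InSigma n k G) (hHG : H ⊆ G)
    (hH : InSigma n k H) (hW : IsBlock (graphOf n G) W) :
    InSigma W.card k (tauE W (resE H W)) :=
  (inSigma_tau_iff (resE_edge_prop hG hHG)).1 ((inSigma_res_iff hG hHG).1 hH W hW)

lemma resE_biUnion_sigE {G : Finset (Finset (Fin n))} (hG : InSigma n k G)
    (p : ∀ W ∈ blocksOf n G, Finset (Finset (Fin W.card)))
    (hp : ∀ (W) (hW : W ∈ blocksOf n G), InSigma W.card k (p W hW))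
    {W : Finset (Fin n)} (hW : W ∈ blocksOf n G) :
    resE ((blocksOf n G).attach.biUnion (fun x => sigE x.1 (p x.1 x.2))) W
      = sigE W (p W hW) := by
  ext e
  rw [mem_resE]
  simp only [Finset.mem_biUnion, Finset.mem_attach, true_and, Subtype.exists]
  constructor
  · rintro ⟨⟨W', hW', he⟩, heW⟩
    have hsub : e ⊆ W' ∧ e.card = 2 :=
      sigE_edges (fun e' he' => (hp W' hW').1 e' he') e he
    have : W' = W := edge_block_unique hG (mem_blocksOf'.1 hW') (mem_blocksOf'.1 hW)
      hsub.2 hsub.1 heW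
    subst this
    exact he
  · intro he
    have hsub : e ⊆ W ∧ e.card = 2 :=
      sigE_edges (fun e' he' => (hp W hW).1 e' he') e he
    exact ⟨⟨W, hW, he⟩, hsub.1⟩

lemma biUnion_inSigma_subset {G F : Finset (Finset (Fin n))} (hG : InSigma n k G)
    (hFG : F ⊆ G)
    (p : ∀ W ∈ blocksOf n G, Finset (Finset (Fin W.card)))
    (hp : ∀ (W) (hW : W ∈ blocksOf n G), InSigma W.card k (p W hW))
    (hpsub : ∀ (W) (hW : W ∈ blocksOf n G), p W hW ⊆ tauE W (resE F W)) :
    InSigma n k ((blocksOf n G).attach.biUnion (fun x => sigE x.1 (p x.1 x.2))) ∧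
      ((blocksOf n G).attach.biUnion (fun x => sigE x.1 (p x.1 x.2))) ⊆ F := by
  have hsubF : ((blocksOf n G).attach.biUnion (fun x => sigE x.1 (p x.1 x.2))) ⊆ F := by
    refine Finset.biUnion_subset.2 ?_
    intro W hW
    refine subset_trans (sigE_mono (hpsub W.1 W.2)) ?_
    rw [sigE_tauE (fun e he => (resE_edge_prop hG hFG e he).1)]
    exact resE_subset F W.1
  refine ⟨?_, hsubF⟩
  rw [inSigma_res_iff hG (hsubF.trans hFG)]
  intro W hW
  rw [resE_biUnion_sigE hG p hp (mem_blocksOf'.2 hW)]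
  have hedges : ∀ e ∈ sigE W (p W (mem_blocksOf'.2 hW)), e ⊆ W ∧ e.card = 2 :=
    sigE_edges (fun e' he' => (hp W (mem_blocksOf'.2 hW)).1 e' he')
  rw [inSigma_tau_iff hedges, tauE_sigE]
  exact hp W (mem_blocksOf'.2 hW)

lemma biUnion_attach_resE {G H : Finset (Finset (Fin n))} (hG : InSigma n k G)
    (hHG : H ⊆ G) :
    (blocksOf n G).attach.biUnion (fun x => resE H x.1) = H := by
  ext e
  simp only [Finset.mem_biUnion, Finset.mem_attach, true_and, Subtype.exists]
  constructor
  · rintro ⟨W, hW, he⟩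
    exact (mem_resE.1 he).1
  · intro he
    obtain ⟨W, hW, heW⟩ := exists_block_of_edge hG (hHG he)
    exact ⟨W, mem_blocksOf'.2 hW, mem_resE.2 ⟨he, heW⟩⟩

lemma sum_nu_eq_prod {G F : Finset (Finset (Fin n))} (hG : InSigma n k G)
    (hFG : F ⊆ G) :
    ∑ H ∈ Finset.univ.filter
        (fun H : Finset (Finset (Fin n)) => InSigma n k H ∧ H ⊆ F), nu n μ G H
      = ∏ W ∈ blocksOf n G, ∑ F' ∈ Finset.univ.filter
          (fun F' : Finset (Finset (Fin W.card)) =>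
            InSigma W.card k F' ∧ F' ⊆ tauE W (resE F W)), μ W.card F' := by
  rw [Finset.prod_sum]
  refine Finset.sum_nbij' (i := fun H => fun W _ => tauE W (resE H W))
    (j := fun p => (blocksOf n G).attach.biUnion (fun x => sigE x.1 (p x.1 x.2)))
    ?_ ?_ ?_ ?_ ?_
  · intro H hH
    rw [Finset.mem_filter] at hH
    obtain ⟨-, hHS, hHF⟩ := hH
    rw [Finset.mem_pi]
    intro W hW
    rw [Finset.mem_filter]
    exact ⟨Finset.mem_univ _,
      tau_res_inSigma hG (hHF.trans hFG) hHS (mem_blocksOf'.1 hW),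
      tauE_mono (resE_mono hHF W)⟩
  · intro p hp
    rw [Finset.mem_pi] at hp
    have hp1 : ∀ (W) (hW : W ∈ blocksOf n G), InSigma W.card k (p W hW) :=
      fun W hW => ((Finset.mem_filter.1 (hp W hW)).2).1
    have hp2 : ∀ (W) (hW : W ∈ blocksOf n G), p W hW ⊆ tauE W (resE F W) :=
      fun W hW => ((Finset.mem_filter.1 (hp W hW)).2).2
    obtain ⟨h1, h2⟩ := biUnion_inSigma_subset hG hFG p hp1 hp2
    exact Finset.mem_filter.2 ⟨Finset.mem_univ _, h1, h2⟩
  · intro H hH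
    rw [Finset.mem_filter] at hH
    obtain ⟨-, hHS, hHF⟩ := hH
    have hHG : H ⊆ G := hHF.trans hFG
    have : ∀ x ∈ (blocksOf n G).attach,
        sigE x.1 (tauE x.1 (resE H x.1)) = resE H x.1 := by
      intro x hx
      exact sigE_tauE (fun e he => (resE_edge_prop hG hHG e he).1)
    show (blocksOf n G).attach.biUnion (fun x => sigE x.1 (tauE x.1 (resE H x.1))) = H
    rw [Finset.biUnion_congr rfl this]
    exact biUnion_attach_resE hG hHG
  · intro p hp
    rw [Finset.mem_pi] at hp
    have hp1 : ∀ (W) (hW : W ∈ blocksOf n G), InSigma W.card k (p W hW) :=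
      fun W hW => ((Finset.mem_filter.1 (hp W hW)).2).1
    funext W hW
    show tauE W (resE ((blocksOf n G).attach.biUnion fun x => sigE x.1 (p x.1 x.2)) W) = p W hW
    rw [resE_biUnion_sigE hG p hp1 hW, tauE_sigE]
  · intro H hH
    exact (Finset.prod_attach (blocksOf n G)
      (fun W => μ W.card (tauE W (resE H W)))).symm

lemma nu_empty (hμbot : ∀ m : ℕ, μ m (∅ : Finset (Finset (Fin m))) = 1)
    (G : Finset (Finset (Fin n))) : nu n μ G ∅ = 1 := by
  unfold nu
  refine Finset.prod_eq_one ?_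
  intro W hW
  rw [show resE (n := n) ∅ W = ∅ from Finset.filter_empty _,
    show tauE W ∅ = ∅ from Finset.image_empty _, hμbot]

lemma sum_nu_zero (hμrec : ∀ (m : ℕ) (F : Finset (Finset (Fin m))), InSigma m k F → F ≠ ∅ →
      ∑ H ∈ Finset.univ.filter
          (fun H : Finset (Finset (Fin m)) => InSigma m k H ∧ H ⊆ F), μ m H = 0)
    {G F : Finset (Finset (Fin n))} (hG : InSigma n k G)
    (hFG : F ⊆ G) (hF : InSigma n k F) (hFne : F ≠ ∅) :
    ∑ H ∈ Finset.univ.filter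
        (fun H : Finset (Finset (Fin n)) => InSigma n k H ∧ H ⊆ F), nu n μ G H = 0 := by
  rw [sum_nu_eq_prod μ hG hFG]
  obtain ⟨e, he⟩ := Finset.nonempty_iff_ne_empty.2 hFne
  obtain ⟨W, hW, heW⟩ := exists_block_of_edge hG (hFG he)
  refine Finset.prod_eq_zero (mem_blocksOf'.2 hW) ?_
  refine hμrec W.card (tauE W (resE F W)) (tau_res_inSigma hG hFG hF hW) ?_
  rw [Ne, tauE_empty_iff]
  intro hc
  have : e ∈ resE F W := mem_resE.2 ⟨he, heW⟩
  rw [hc] at this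
  exact absurd this (Finset.notMem_empty e)

lemma mu_eq_nu
    (hμbot : ∀ m : ℕ, μ m (∅ : Finset (Finset (Fin m))) = 1)
    (hμrec : ∀ (m : ℕ) (F : Finset (Finset (Fin m))), InSigma m k F → F ≠ ∅ →
      ∑ H ∈ Finset.univ.filter
          (fun H : Finset (Finset (Fin m)) => InSigma m k H ∧ H ⊆ F), μ m H = 0)
    {G : Finset (Finset (Fin n))} (hG : InSigma n k G) :
    ∀ (c : ℕ) (F : Finset (Finset (Fin n))), F.card ≤ c → F ⊆ G → InSigma n k F →
      μ n F = nu n μ G F := by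
  intro c
  induction c with
  | zero =>
    intro F hc hFG hF
    rw [Finset.card_eq_zero.1 (Nat.le_zero.1 hc), hμbot, nu_empty μ hμbot]
  | succ c ih =>
    intro F hc hFG hF
    rcases eq_or_ne F ∅ with rfl | hFne
    · rw [hμbot, nu_empty μ hμbot]
    set S := Finset.univ.filter
      (fun H : Finset (Finset (Fin n)) => InSigma n k H ∧ H ⊆ F) with hSdef
    have hFS : F ∈ S := Finset.mem_filter.2 ⟨Finset.mem_univ _, hF, subset_rfl⟩
    have hmu : μ n F + ∑ H ∈ S.erase F, μ n H = 0 := by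
      rw [Finset.add_sum_erase S (μ n) hFS]
      exact hμrec n F hF hFne
    have hnu : nu n μ G F + ∑ H ∈ S.erase F, nu n μ G H = 0 := by
      rw [Finset.add_sum_erase S (nu n μ G) hFS]
      exact sum_nu_zero μ hμrec hG hFG hF hFne
    have hcong : ∑ H ∈ S.erase F, μ n H = ∑ H ∈ S.erase F, nu n μ G H := by
      refine Finset.sum_congr rfl ?_
      intro H hH
      obtain ⟨hne, hHS⟩ := Finset.mem_erase.1 hH
      rw [hSdef, Finset.mem_filter] at hHS
      obtain ⟨-, hHsig, hHF⟩ := hHS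
      have hss : H ⊂ F := Finset.ssubset_iff_subset_ne.2 ⟨hHF, hne⟩
      exact ih H (by have := Finset.card_lt_card hss; omega) (hHF.trans hFG) hHsig
    omega

end Main

open scoped Classical in
/-- Multiplicativity of the Möbius function of `Σ_{n,k}` over the blocks of a
connected graph: `μ_{Σ_{n,k}}(0̂, G) = Π_i μ_{Σ_{w_i,k}}(0̂, 1̂)` where `w_1,…,w_r`
are the sizes of the blocks of `G`.  Here the Möbius functions are encoded by a
family `μ m : Finset (Finset (Fin m)) → ℤ` (`μ m F = μ_{Σ_{m,k}}(0̂, F)`) subject to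
the defining recurrence `μ(0̂,0̂) = 1` and `Σ_{0̂ ≤ H ≤ F} μ(0̂,H) = 0` for `0̂ < F`
in `Σ_{m,k}`, which determines it uniquely. -/
theorem mobius_multiplicative_over_blocks (n k : ℕ) (hk : 2 ≤ k) (hn : 2 ≤ n)
    (μ : ∀ m : ℕ, Finset (Finset (Fin m)) → ℤ)
    (hμbot : ∀ m : ℕ, μ m (∅ : Finset (Finset (Fin m))) = 1)
    (hμrec : ∀ (m : ℕ) (F : Finset (Finset (Fin m))), InSigma m k F → F ≠ ∅ →
      ∑ H ∈ Finset.univ.filter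
          (fun H : Finset (Finset (Fin m)) => InSigma m k H ∧ H ⊆ F), μ m H = 0)
    (G : Finset (Finset (Fin n))) (hG : InSigma n k G)
    (hconn : (graphOf n G).Connected) :
    μ n G = ∏ W ∈ Finset.univ.filter
        (fun W : Finset (Fin n) => IsBlock (graphOf n G) W),
      μ W.card (completeEdges W.card) := by
  have h1 := mu_eq_nu μ hμbot hμrec hG G.card G le_rfl subset_rfl hG
  rw [h1]
  show ∏ W ∈ blocksOf n G, μ W.card (tauE W (resE G W)) = _
  unfold blocksOf
  refine Finset.prod_congr rfl ?_
  intro W hW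
  rw [resE_self_eq_powerset hG hconn hn (mem_blocksOf'.1 (by unfold blocksOf; exact hW)),
    tauE_powersetCard]
end

section
/- Let n ≥ 2 and let G be a simple graph on [n] = {1,…,n}. Then G is (n−2)-connected if and only if the complement of G is a matching, i.e., every vertex of [n] belongs to at most one 2-element subset of [n] that is not an edge of G (every vertex has degree at most 1 in the complement graph). (This is the combinatorial content of the statement that the matching complex M_n is the Alexander dual of the complex Δ_n^{n−2} of not (n−2)-connected graphs.) -/
open Finset

/-- `G` is `i`-connected: more than `i` vertices, and removing fewer than `i`
vertices leaves a connected graph. -/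
def IsIConn {V : Type} [Fintype V] (i : ℕ) (G : SimpleGraph V) : Prop :=
  i < Fintype.card V ∧
    ∀ S : Finset V, S.card < i → (G.induce ((↑S : Set V)ᶜ)).Connected

/-- A graph on `[n]` (`n ≥ 2`) is `(n-2)`-connected iff its complement is a matching,
i.e. every vertex has degree at most 1 in the complement graph. -/
theorem n_minus_two_connected_iff_complement_matching (n : ℕ) (hn : 2 ≤ n)
    (G : SimpleGraph (Fin n)) :
    IsIConn (n - 2) G ↔ ∀ v : Fin n, (Gᶜ.neighborSet v).ncard ≤ 1 := by
  constructor
  · rintro ⟨hcard, hconn⟩ v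
    rw [Set.ncard_le_one_iff]
    rintro a b ⟨hva, hGa⟩ ⟨hvb, hGb⟩
    by_contra hab
    -- v, a, b distinct, with v nonadjacent to a and b
    have hva' : v ≠ a := hva
    have hvb' : v ≠ b := hvb
    set T : Finset (Fin n) := {v, a, b} with hT
    have hTcard : T.card = 3 := by
      rw [hT]
      rw [Finset.card_insert_of_notMem (by simp [hva', hvb']),
        Finset.card_insert_of_notMem (by simp [hab]), Finset.card_singleton]
    have hn3 : 3 ≤ n := by
      have := Finset.card_le_card (Finset.subset_univ T)
      simpa [hTcard] using this
    have hScard : Tᶜ.card < n - 2 := by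
      rw [Finset.card_compl, hTcard]
      simp only [Fintype.card_fin]
      omega
    have hc := hconn Tᶜ hScard
    have hset : ((↑(Tᶜ) : Set (Fin n))ᶜ) = (↑T : Set (Fin n)) := by
      simp
    have hvT : v ∈ ((↑(Tᶜ) : Set (Fin n))ᶜ) := by rw [hset]; simp [hT]
    have haT : a ∈ ((↑(Tᶜ) : Set (Fin n))ᶜ) := by rw [hset]; simp [hT]
    have hr := hc.preconnected ⟨v, hvT⟩ ⟨a, haT⟩
    obtain ⟨w⟩ := hr
    cases w with
    | nil => exact hva' (by simpa using congrArg Subtype.val (rfl : (⟨v, hvT⟩ : _) = _) ▸ hva' rfl)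
    | cons h p =>
      -- h : adjacency from ⟨v,_⟩ to some ⟨u,_⟩, with u ∈ T, u ≠ v
      rename_i u
      have hadj : G.Adj v u.val := h
      have huT : u.val ∈ (↑T : Set (Fin n)) := by rw [← hset]; exact u.2
      have : u.val = v ∨ u.val = a ∨ u.val = b := by
        simpa [hT] using huT
      rcases this with h1 | h1 | h1
      · rw [h1] at hadj; exact G.loopless.irrefl v hadj
      · rw [h1] at hadj; exact hGa hadj
      · rw [h1] at hadj; exact hGb hadj
  · intro hM
    have hmatch : ∀ v a b : Fin n, v ≠ a → v ≠ b → ¬G.Adj v a → ¬G.Adj v b → a = b := by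
      intro v a b h1 h2 h3 h4
      have ha : a ∈ Gᶜ.neighborSet v := ⟨h1, h3⟩
      have hb : b ∈ Gᶜ.neighborSet v := ⟨h2, h4⟩
      exact (Set.ncard_le_one_iff (Set.toFinite _)).mp (hM v) ha hb
    constructor
    · simpa using Nat.lt_of_lt_of_le (by omega : n - 2 < n) (le_of_eq (Fintype.card_fin n).symm)
    · intro S hS
      set s : Set (Fin n) := (↑S : Set (Fin n))ᶜ with hs
      have hsc : 3 ≤ Sᶜ.card := by
        rw [Finset.card_compl]
        simp only [Fintype.card_fin]
        omega
      have hmem : ∀ x : Fin n, x ∈ s ↔ x ∈ Sᶜ := by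
        intro x; simp [hs]
      have hne : s.Nonempty := by
        obtain ⟨x, hx⟩ := Finset.card_pos.mp (by omega : 0 < Sᶜ.card)
        exact ⟨x, (hmem x).mpr hx⟩
      haveI : Nonempty ↑s := ⟨⟨hne.choose, hne.choose_spec⟩⟩
      refine ⟨?_⟩
      intro x y
      by_cases hxy : x = y
      · rw [hxy]
      have hxy' : x.val ≠ y.val := fun h => hxy (Subtype.ext h)
      by_cases hadj : G.Adj x.val y.val
      · exact (SimpleGraph.Adj.reachable (by exact hadj : (G.induce s).Adj x y))
      -- find z in s distinct from x and y
      have hz : ∃ z ∈ Sᶜ, z ≠ x.val ∧ z ≠ y.val := by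
        have : 0 < (Sᶜ \ {x.val, y.val}).card := by
          have h2 : ({x.val, y.val} : Finset (Fin n)).card ≤ 2 :=
            Finset.card_insert_le _ _ |>.trans (by simp)
          have := Finset.le_card_sdiff ({x.val, y.val}) Sᶜ
          omega
        obtain ⟨z, hz⟩ := Finset.card_pos.mp this
        rw [Finset.mem_sdiff] at hz
        refine ⟨z, hz.1, ?_, ?_⟩ <;> simp_all [Finset.mem_insert]
      obtain ⟨z, hzS, hzx, hzy⟩ := hz
      have hzs : z ∈ s := (hmem z).mpr hzS
      have hxz : G.Adj x.val z := by
        by_contra h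
        have hnadj : ¬G.Adj x.val y.val := hadj
        exact hzy (hmatch x.val y.val z hxy' (Ne.symm hzx) hnadj h).symm
      have hzy' : G.Adj z y.val := by
        by_contra h
        have : x.val = z := hmatch y.val x.val z (Ne.symm hxy') (Ne.symm hzy)
          (fun h' => hadj h'.symm) (fun h' => h h'.symm)
        exact hzx this.symm
      have r1 : (G.induce s).Reachable x ⟨z, hzs⟩ :=
        SimpleGraph.Adj.reachable (by exact hxz)
      have r2 : (G.induce s).Reachable ⟨z, hzs⟩ y :=
        SimpleGraph.Adj.reachable (by exact hzy')
      exact r1.trans r2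
end
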